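/- In a non-degenerate Euclidean TSP instance, every 2-optimal tour is simple, i.e., viewing each tour edge as the closed line segment between its endpoints, no two edges of the tour intersect in a point that lies in the interior of at least one of the two corresponding segments. -/

import Mathlib

open Classical

/-- The `p`-norm distance between two points of `ℝ²`. For `p = 2` this is the
Euclidean distance. -/
noncomputable def pdist (p : ℝ) (a b : ℝ × ℝ) : ℝ :=
  (|a.1 - b.1| ^ p + |a.2 - b.2| ^ p) ^ (1 / p)

/-- `L` is a tour (Hamiltonian cycle) of the finite point set `V`. -/
def IsTour (V : Finset (ℝ × ℝ)) (L : List (ℝ × ℝ)) : Prop :=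
  L.Nodup ∧ L.toFinset = V

/-- The (oriented) tour `L` is 2-optimal: for any two distinct directed edges
`(a,b)` and `(x,y)` of the tour, `c(a,x) + c(b,y) ≥ c(a,b) + c(x,y)`. -/
def IsTwoOptimal (p : ℝ) (L : List (ℝ × ℝ)) : Prop :=
  ∀ e ∈ L.zip (L.rotate 1), ∀ f ∈ L.zip (L.rotate 1), e ≠ f →
    pdist p e.1 e.2 + pdist p f.1 f.2 ≤ pdist p e.1 f.1 + pdist p e.2 f.2

/-- A tour is simple if, viewing each edge as the closed line segment between
its endpoints, no two distinct edges intersect in a point lying in the interior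
(the open segment) of at least one of the two segments. -/
def IsSimpleTour (L : List (ℝ × ℝ)) : Prop :=
  ∀ e ∈ L.zip (L.rotate 1), ∀ f ∈ L.zip (L.rotate 1), e ≠ f →
    ∀ z : ℝ × ℝ, z ∈ segment ℝ e.1 e.2 → z ∈ segment ℝ f.1 f.2 →
      z ∉ openSegment ℝ e.1 e.2 ∧ z ∉ openSegment ℝ f.1 f.2


noncomputable section

def lphi (c u v : ℂ) : ℝ := ((v - c) * (starRingEnd ℂ) u).re

def lmem (c u v : ℂ) : Prop := ((v - c) * (starRingEnd ℂ) u).im = 0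

lemma lmem_repr {c u v : ℂ} (hu : ‖u‖ = 1) (h : lmem c u v) :
    v = c + (lphi c u v : ℂ) * u := by
  have huu : u * (starRingEnd ℂ) u = 1 := by
    rw [Complex.mul_conj, Complex.normSq_eq_norm_sq, hu]; norm_num
  have h1 : ((v - c) * (starRingEnd ℂ) u) = ((lphi c u v : ℝ) : ℂ) := by
    apply Complex.ext
    · simp [lphi]
    · simpa [lmem] using h
  have h2 : (v - c) = ((lphi c u v : ℝ) : ℂ) * u := by
    calc (v - c) = (v - c) * ((starRingEnd ℂ) u * u) := by
          rw [mul_comm ((starRingEnd ℂ) u) u, huu, mul_one]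
      _ = ((v - c) * (starRingEnd ℂ) u) * u := by ring
      _ = ((lphi c u v : ℝ) : ℂ) * u := by rw [h1]
  linear_combination h2

lemma lmem_inj {c u v w : ℂ} (hu : ‖u‖ = 1) (hv : lmem c u v) (hw : lmem c u w)
    (h : lphi c u v = lphi c u w) : v = w := by
  rw [lmem_repr hu hv, lmem_repr hu hw, h]

lemma lphi_dist {c u v w : ℂ} (hu : ‖u‖ = 1) (hv : lmem c u v) (hw : lmem c u w) :
    dist v w = |lphi c u v - lphi c u w| := by
  have hvw : v - w = ((lphi c u v - lphi c u w : ℝ) : ℂ) * u := by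
    push_cast
    linear_combination (lmem_repr hu hv) - (lmem_repr hu hw)
  rw [Complex.dist_eq, hvw, norm_mul, hu, mul_one, Complex.norm_real, Real.norm_eq_abs]

lemma combo_key (c u v w : ℂ) {α β : ℝ} (hαβ : α + β = 1) :
    (α • v + β • w - c) * (starRingEnd ℂ) u
      = (α : ℂ) * ((v - c) * (starRingEnd ℂ) u) + (β : ℂ) * ((w - c) * (starRingEnd ℂ) u) := by
  have hc : ((α : ℂ) + (β : ℂ)) = 1 := by exact_mod_cast congrArg (fun r : ℝ => (r : ℂ)) hαβ
  rw [Complex.real_smul, Complex.real_smul]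
  linear_combination (c * (starRingEnd ℂ) u) * hc

lemma lmem_combo {c u v w : ℂ} {α β : ℝ} (hαβ : α + β = 1) (hv : lmem c u v) (hw : lmem c u w) :
    lmem c u (α • v + β • w) := by
  have hv' : ((v - c) * (starRingEnd ℂ) u).im = 0 := hv
  have hw' : ((w - c) * (starRingEnd ℂ) u).im = 0 := hw
  show ((α • v + β • w - c) * (starRingEnd ℂ) u).im = 0
  rw [combo_key c u v w hαβ]
  simp [Complex.add_im, Complex.mul_im, hv', hw']

lemma lphi_combo (c u : ℂ) {v w : ℂ} {α β : ℝ} (hαβ : α + β = 1) :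
    lphi c u (α • v + β • w) = α * lphi c u v + β * lphi c u w := by
  unfold lphi
  rw [combo_key c u v w hαβ]
  simp [Complex.add_re, Complex.mul_re]

lemma seg_lmem {c u v w z : ℂ} (hv : lmem c u v) (hw : lmem c u w)
    (hz : z ∈ segment ℝ v w) : lmem c u z := by
  obtain ⟨α, β, hα, hβ, hαβ, rfl⟩ := hz
  exact lmem_combo hαβ hv hw

lemma combo_between {α β P Q : ℝ} (hα : 0 ≤ α) (hβ : 0 ≤ β) (hαβ : α + β = 1) :
    min P Q ≤ α * P + β * Q ∧ α * P + β * Q ≤ max P Q := by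
  have eP : α * P + β * P = P := by linear_combination P * hαβ
  have eQ : α * Q + β * Q = Q := by linear_combination Q * hαβ
  rcases le_total P Q with h | h
  · rw [min_eq_left h, max_eq_right h]
    constructor <;>
      linarith [mul_le_mul_of_nonneg_left h hβ, mul_le_mul_of_nonneg_left h hα]
  · rw [min_eq_right h, max_eq_left h]
    constructor <;>
      linarith [mul_le_mul_of_nonneg_left h hβ, mul_le_mul_of_nonneg_left h hα]

lemma seg_btw (c u : ℂ) {v w z : ℂ} (hz : z ∈ segment ℝ v w) :
    min (lphi c u v) (lphi c u w) ≤ lphi c u z ∧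
      lphi c u z ≤ max (lphi c u v) (lphi c u w) := by
  obtain ⟨α, β, hα, hβ, hαβ, rfl⟩ := hz
  rw [lphi_combo c u hαβ]
  exact combo_between hα hβ hαβ

lemma open_ne {v w z : ℂ} (hz : z ∈ openSegment ℝ v w) (hvw : v ≠ w) : z ≠ v ∧ z ≠ w := by
  obtain ⟨α, β, hα, hβ, hαβ, hz⟩ := hz
  rw [Complex.real_smul, Complex.real_smul] at hz
  have hc : ((α : ℂ) + (β : ℂ)) = 1 := by exact_mod_cast congrArg (fun r : ℝ => (r : ℂ)) hαβ
  constructor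
  · intro h
    apply hvw
    have key : (α : ℂ) * v + (β : ℂ) * w = v := hz.trans h
    have h0 : (β : ℂ) * (w - v) = 0 := by linear_combination key - v * hc
    rcases mul_eq_zero.1 h0 with h1 | h1
    · exact absurd (by exact_mod_cast h1) (ne_of_gt hβ)
    · exact (sub_eq_zero.1 h1).symm
  · intro h
    apply hvw
    have key : (α : ℂ) * v + (β : ℂ) * w = w := hz.trans h
    have h0 : (α : ℂ) * (v - w) = 0 := by linear_combination key - w * hc
    rcases mul_eq_zero.1 h0 with h1 | h1
    · exact absurd (by exact_mod_cast h1) (ne_of_gt hα)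
    · exact sub_eq_zero.1 h1

lemma combo_strict {α β P Q : ℝ} (hα : 0 < α) (hβ : 0 < β) (hαβ : α + β = 1) (h : P ≠ Q) :
    min P Q < α * P + β * Q ∧ α * P + β * Q < max P Q := by
  have eP : α * P + β * P = P := by linear_combination P * hαβ
  have eQ : α * Q + β * Q = Q := by linear_combination Q * hαβ
  rcases lt_or_gt_of_ne h with h | h
  · rw [min_eq_left h.le, max_eq_right h.le]
    constructor <;>
      linarith [mul_lt_mul_of_pos_left h hβ, mul_lt_mul_of_pos_left h hα]
  · rw [min_eq_right h.le, max_eq_left h.le]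
    constructor <;>
      linarith [mul_lt_mul_of_pos_left h hβ, mul_lt_mul_of_pos_left h hα]

lemma open_btw (c u : ℂ) {v w z : ℂ} (hz : z ∈ openSegment ℝ v w)
    (hne : lphi c u v ≠ lphi c u w) :
    min (lphi c u v) (lphi c u w) < lphi c u z ∧
      lphi c u z < max (lphi c u v) (lphi c u w) := by
  obtain ⟨α, β, hα, hβ, hαβ, rfl⟩ := hz
  rw [lphi_combo c u hαβ]
  exact combo_strict hα hβ hαβ hne

lemma stretch {c u v w s : ℂ} (hu : ‖u‖ = 1) (hv : lmem c u v) (hw : lmem c u w)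
    (hseg : w ∈ segment ℝ v s) (hwv : w ≠ v) (hws : w ≠ s) :
    lmem c u s ∧ (lphi c u v < lphi c u w → lphi c u w < lphi c u s) := by
  obtain ⟨α, β, hα, hβ, hαβ, hcombo⟩ := hseg
  have hβ0 : β ≠ 0 := by
    rintro rfl
    apply hwv
    rw [← hcombo]
    have : α = 1 := by linarith
    simp [this]
  have hα0 : α ≠ 0 := by
    rintro rfl
    apply hws
    rw [← hcombo]
    have : β = 1 := by linarith
    simp [this]
  have hβp : 0 < β := lt_of_le_of_ne hβ hβ0.symm
  have hαp : 0 < α := lt_of_le_of_ne hα hα0.symm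
  have hkey : (w - c) * (starRingEnd ℂ) u
      = (α : ℂ) * ((v - c) * (starRingEnd ℂ) u) + (β : ℂ) * ((s - c) * (starRingEnd ℂ) u) := by
    rw [← hcombo]
    exact combo_key c u v s hαβ
  have him := congrArg Complex.im hkey
  have hv' : ((v - c) * (starRingEnd ℂ) u).im = 0 := hv
  have hw' : ((w - c) * (starRingEnd ℂ) u).im = 0 := hw
  simp only [Complex.add_im, Complex.mul_im, Complex.ofReal_re, Complex.ofReal_im,
    hv', hw', mul_zero, zero_mul, add_zero, zero_add] at him
  have hls : lmem c u s := by
    show ((s - c) * (starRingEnd ℂ) u).im = 0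
    rcases mul_eq_zero.1 him.symm with h1 | h1
    · exact absurd h1 hβ0
    · exact h1
  refine ⟨hls, ?_⟩
  intro hlt
  have hphiw : lphi c u w = α * lphi c u v + β * lphi c u s := by
    rw [← hcombo]; exact lphi_combo c u hαβ
  have e : β * (lphi c u s - lphi c u w) = α * (lphi c u w - lphi c u v) := by
    linear_combination (-(lphi c u w)) * hαβ - hphiw
  nlinarith [e, mul_pos hαp (sub_pos.2 hlt), hβp]
noncomputable section

def toC (p : ℝ × ℝ) : ℂ := ⟨p.1, p.2⟩

lemma toC_inj : Function.Injective toC := by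
  intro a b h
  have h1 := congrArg Complex.re h
  have h2 := congrArg Complex.im h
  exact Prod.ext h1 h2

lemma pdist_two (a b : ℝ × ℝ) : pdist 2 a b = dist (toC a) (toC b) := by
  rw [Complex.dist_eq, Complex.norm_def, Complex.normSq_apply]
  unfold pdist toC
  simp only [Complex.sub_re, Complex.sub_im]
  rw [Real.sqrt_eq_rpow]
  norm_num
  congr 1
  ring

lemma toC_combo {α β : ℝ} (p q : ℝ × ℝ) :
    toC (α • p + β • q) = α • toC p + β • toC q := by
  apply Complex.ext <;>
    simp [toC, Complex.add_re, Complex.add_im, Complex.real_smul, Complex.mul_re,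
      Complex.mul_im, Prod.smul_fst, Prod.smul_snd, smul_eq_mul]

lemma toC_segment {a b z : ℝ × ℝ} (h : z ∈ segment ℝ a b) :
    toC z ∈ segment ℝ (toC a) (toC b) := by
  obtain ⟨α, β, hα, hβ, hαβ, rfl⟩ := h
  exact ⟨α, β, hα, hβ, hαβ, (toC_combo a b).symm⟩

lemma toC_openSegment {a b z : ℝ × ℝ} (h : z ∈ openSegment ℝ a b) :
    toC z ∈ openSegment ℝ (toC a) (toC b) := by
  obtain ⟨α, β, hα, hβ, hαβ, rfl⟩ := h
  exact ⟨α, β, hα, hβ, hαβ, (toC_combo a b).symm⟩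

lemma mod_succ_eq (m n : ℕ) (h : 0 < n) : (m % n + 1) % n = (m + 1) % n := by
  conv_rhs => rw [Nat.add_mod]
  rcases eq_or_lt_of_le (show 1 ≤ n from h) with h1 | h1
  · rw [← h1]; simp
  · rw [Nat.mod_eq_of_lt h1]

def tourSeq (L : List (ℝ × ℝ)) (h : 0 < L.length) : ℕ → ℂ :=
  fun m => toC (L.get ⟨m % L.length, Nat.mod_lt m h⟩)

lemma get_eq_tourSeq (L : List (ℝ × ℝ)) (h : 0 < L.length) {i : ℕ} (hi : i < L.length) :
    toC (L.get ⟨i, hi⟩) = tourSeq L h i := by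
  have he : (⟨i % L.length, Nat.mod_lt i h⟩ : Fin L.length) = ⟨i, hi⟩ :=
    Fin.ext (Nat.mod_eq_of_lt hi)
  unfold tourSeq
  rw [he]

lemma tourSeq_mod (L : List (ℝ × ℝ)) (h : 0 < L.length) {m1 m2 : ℕ}
    (hm : m1 % L.length = m2 % L.length) : tourSeq L h m1 = tourSeq L h m2 := by
  unfold tourSeq
  have he : (⟨m1 % L.length, Nat.mod_lt m1 h⟩ : Fin L.length)
      = ⟨m2 % L.length, Nat.mod_lt m2 h⟩ := Fin.ext hm
  rw [he]

lemma tourSeq_inj (L : List (ℝ × ℝ)) (h : 0 < L.length) (hnd : L.Nodup) {m1 m2 : ℕ}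
    (hm : tourSeq L h m1 = tourSeq L h m2) : m1 % L.length = m2 % L.length := by
  have := toC_inj hm
  have h2 := (hnd.get_inj_iff).1 this
  exact congrArg Fin.val h2

lemma tourSeq_zip_mem (L : List (ℝ × ℝ)) (h : 0 < L.length) (m : ℕ) :
    ∃ e ∈ L.zip (L.rotate 1), toC e.1 = tourSeq L h m ∧ toC e.2 = tourSeq L h (m + 1) := by
  have hlen : (L.zip (L.rotate 1)).length = L.length := by
    simp [List.length_zip, List.length_rotate]
  have hm : m % L.length < (L.zip (L.rotate 1)).length := by
    rw [hlen]; exact Nat.mod_lt m h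
  refine ⟨(L.zip (L.rotate 1)).get ⟨m % L.length, hm⟩, List.get_mem _ _, ?_, ?_⟩
  · rw [List.get_eq_getElem, List.getElem_zip]; show toC (L.get ⟨m % L.length, _⟩) = _
    rw [get_eq_tourSeq L h _]
    exact tourSeq_mod L h (Nat.mod_mod_of_dvd m dvd_rfl)
  · rw [List.get_eq_getElem, List.getElem_zip]
    show toC ((L.rotate 1).get _) = _
    rw [List.get_rotate]
    rw [get_eq_tourSeq L h _]
    exact tourSeq_mod L h (by simpa using mod_succ_eq m L.length h)

lemma mem_zip_tourSeq (L : List (ℝ × ℝ)) (h : 0 < L.length) {e : (ℝ×ℝ) × (ℝ×ℝ)}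
    (he : e ∈ L.zip (L.rotate 1)) :
    ∃ m, toC e.1 = tourSeq L h m ∧ toC e.2 = tourSeq L h (m + 1) := by
  obtain ⟨⟨i, hi⟩, hget⟩ := List.mem_iff_get.1 he
  have hlen : (L.zip (L.rotate 1)).length = L.length := by
    simp [List.length_zip, List.length_rotate]
  have hi' : i < L.length := by rw [hlen] at hi; exact hi
  refine ⟨i, ?_, ?_⟩
  · rw [← hget, List.get_eq_getElem, List.getElem_zip]
    exact get_eq_tourSeq L h _
  · rw [← hget, List.get_eq_getElem, List.getElem_zip]
    show toC ((L.rotate 1).get _) = _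
    rw [List.get_rotate]
    rw [get_eq_tourSeq L h _]
    exact tourSeq_mod L h (by simpa using mod_succ_eq i L.length h)

lemma cover_arith (n sa sm : ℕ) (hn : 0 < n) (ha : sa < n) (hm : sm < n) :
    ∃ d, d < n ∧ (sa + d) % n = sm := by
  rcases le_or_gt sa sm with h | h
  · exact ⟨sm - sa, by omega,
      by rw [show sa + (sm - sa) = sm by omega, Nat.mod_eq_of_lt hm]⟩
  · refine ⟨sm + n - sa, by omega, ?_⟩
    rw [show sa + (sm + n - sa) = sm + n by omega, Nat.add_mod_right, Nat.mod_eq_of_lt hm]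

lemma walk_right (n : ℕ) (seq : ℕ → ℂ) (hn : 2 ≤ n)
    (hper : ∀ m, seq (m + n) = seq m)
    (hinj : ∀ m1 m2, seq m1 = seq m2 → m1 % n = m2 % n)
    (h2 : ∀ m m', seq m ≠ seq m' →
      dist (seq m) (seq (m+1)) + dist (seq m') (seq (m'+1))
        ≤ dist (seq m) (seq m') + dist (seq (m+1)) (seq (m'+1)))
    (c u : ℂ) (hu : ‖u‖ = 1) :
    ∀ N : ℕ, ∀ i j : ℕ, ∀ t : ℝ,
      ((Finset.range n).filter (fun m => t < lphi c u (seq m))).card ≤ N →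
      seq i ≠ seq j →
      lmem c u (seq i) → lmem c u (seq (i+1)) →
      lmem c u (seq j) → lmem c u (seq (j+1)) →
      lphi c u (seq i) < t → t < lphi c u (seq (i+1)) →
      lphi c u (seq (j+1)) < t → t < lphi c u (seq j) →
      ∃ k, (i+1+k) % n = j % n ∧ ∀ m ≤ k, lmem c u (seq (i+1+m)) := by
  have hn0 : 0 < n := by omega
  have seqshift : ∀ q r, seq (r + q * n) = seq r := by
    intro q
    induction q with
    | zero => intro r; simp
    | succ q ih =>
        intro r
        have e : r + (q+1) * n = (r + q * n) + n := by ring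
        rw [e, hper, ih]
  have seqmod : ∀ m1 m2, m1 % n = m2 % n → seq m1 = seq m2 := by
    intro m1 m2 h
    have e1 : seq m1 = seq (m1 % n) := by
      conv_lhs => rw [← Nat.mod_add_div' m1 n]
      exact seqshift (m1 / n) (m1 % n)
    have e2 : seq m2 = seq (m2 % n) := by
      conv_lhs => rw [← Nat.mod_add_div' m2 n]
      exact seqshift (m2 / n) (m2 % n)
    rw [e1, e2, h]
  have msucc : ∀ m1 m2, m1 % n = m2 % n → (m1+1) % n = (m2+1) % n := by
    intro m1 m2 h
    rw [← mod_succ_eq m1 n hn0, h, mod_succ_eq m2 n hn0]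
  have succ_ne : ∀ m, seq m ≠ seq (m+1) := by
    intro m h
    have h1 : m % n = (m+1) % n := hinj _ _ h
    have h2' : (n:ℤ) ∣ ((m+1 : ℕ) : ℤ) - ((m : ℕ) : ℤ) := Nat.ModEq.dvd h1
    have h3 : (n:ℤ) ∣ 1 := by
      have e : ((m+1 : ℕ) : ℤ) - ((m:ℕ):ℤ) = 1 := by push_cast; ring
      rwa [e] at h2'
    have h4 : (n:ℤ) ≤ 1 := Int.le_of_dvd one_pos h3
    have h5 : (2:ℤ) ≤ (n:ℤ) := by exact_mod_cast hn
    omega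
  intro N
  induction N with
  | zero =>
    intro i j t hcard hij hLa hLb hLx hLy hA hB hY hX
    exfalso
    have hjm : j % n ∈ (Finset.range n).filter (fun m => t < lphi c u (seq m)) := by
      refine Finset.mem_filter.2 ⟨Finset.mem_range.2 (Nat.mod_lt j hn0), ?_⟩
      have e : seq (j % n) = seq j := seqmod _ _ (Nat.mod_mod_of_dvd j dvd_rfl)
      show t < lphi c u (seq (j % n))
      rw [e]
      exact hX
    have := Finset.card_pos.2 ⟨_, hjm⟩
    omega
  | succ N IH =>
    intro i j t hcard hij hLa hLb hLx hLy hA hB hY hX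
    by_cases hbx : seq (i+1) = seq j
    · refine ⟨0, ?_, ?_⟩
      · have := hinj _ _ hbx
        simpa using this
      · intro m hm
        have hm0 : m = 0 := Nat.le_zero.1 hm
        subst hm0
        simpa using hLb
    · rcases lt_trichotomy (lphi c u (seq (i+1))) (lphi c u (seq j)) with hlt | heq | hgt
      · -- climb: the successor of i+1 is on the line, further right
        have hne : seq j ≠ seq (i+1) := fun h => hbx h.symm
        have key := h2 j (i+1) hne
        rw [show i+1+1 = i+2 by omega] at key
        have dxy : dist (seq j) (seq (j+1)) = lphi c u (seq j) - lphi c u (seq (j+1)) := by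
          rw [lphi_dist hu hLx hLy, abs_of_pos (by linarith)]
        have dxb : dist (seq j) (seq (i+1)) = lphi c u (seq j) - lphi c u (seq (i+1)) := by
          rw [lphi_dist hu hLx hLb, abs_of_pos (by linarith)]
        have dyb : dist (seq (j+1)) (seq (i+1))
            = lphi c u (seq (i+1)) - lphi c u (seq (j+1)) := by
          rw [lphi_dist hu hLy hLb,
            abs_of_neg (by linarith : lphi c u (seq (j+1)) - lphi c u (seq (i+1)) < 0)]
          ring
        have tri := dist_triangle (seq (j+1)) (seq (i+1)) (seq (i+2))
        have heq2 : dist (seq (j+1)) (seq (i+1)) + dist (seq (i+1)) (seq (i+2))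
            = dist (seq (j+1)) (seq (i+2)) := by
          apply le_antisymm
          · linarith [key, dxy, dxb, dyb]
          · exact tri
        have hseg : seq (i+1) ∈ segment ℝ (seq (j+1)) (seq (i+2)) :=
          mem_segment_iff_wbtw.2 (dist_add_dist_eq_iff.1 heq2)
        have hbny : seq (i+1) ≠ seq (j+1) := by
          intro h
          have h' := congrArg (lphi c u) h
          linarith
        have hbnc : seq (i+1) ≠ seq (i+2) := by
          have h' := succ_ne (i+1)
          simpa [show i+1+1 = i+2 by omega] using h'
        obtain ⟨hLc, hmono⟩ := stretch hu hLy hLb hseg hbny hbnc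
        have hBC : lphi c u (seq (i+1)) < lphi c u (seq (i+2)) := hmono (by linarith)
        set t' := (lphi c u (seq (i+1))
            + min (lphi c u (seq j)) (lphi c u (seq (i+2)))) / 2 with ht'def
        have hmin : lphi c u (seq (i+1))
            < min (lphi c u (seq j)) (lphi c u (seq (i+2))) := lt_min hlt hBC
        have ht1 : lphi c u (seq (i+1)) < t' := by rw [ht'def]; linarith
        have ht2 : t' < lphi c u (seq j) := by
          have h' := min_le_left (lphi c u (seq j)) (lphi c u (seq (i+2)))
          rw [ht'def]; linarith
        have ht3 : t' < lphi c u (seq (i+2)) := by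
          have h' := min_le_right (lphi c u (seq j)) (lphi c u (seq (i+2)))
          rw [ht'def]; linarith
        have htt : t < t' := by linarith
        have hsub : (Finset.range n).filter (fun m => t' < lphi c u (seq m))
            ⊆ (Finset.range n).filter (fun m => t < lphi c u (seq m)) := by
          intro m hm
          rw [Finset.mem_filter] at hm ⊢
          exact ⟨hm.1, by linarith [hm.2]⟩
        have hbmem : (i+1) % n ∈ (Finset.range n).filter (fun m => t < lphi c u (seq m)) := by
          refine Finset.mem_filter.2 ⟨Finset.mem_range.2 (Nat.mod_lt _ hn0), ?_⟩
          show t < lphi c u (seq ((i+1) % n))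
          rw [seqmod ((i+1) % n) (i+1) (Nat.mod_mod_of_dvd _ dvd_rfl)]
          exact hB
        have hbnot : (i+1) % n ∉ (Finset.range n).filter (fun m => t' < lphi c u (seq m)) := by
          intro hmem
          rw [Finset.mem_filter] at hmem
          have h' : t' < lphi c u (seq ((i+1) % n)) := hmem.2
          rw [seqmod ((i+1)%n) (i+1) (Nat.mod_mod_of_dvd _ dvd_rfl)] at h'
          linarith
        have hcard2 : ((Finset.range n).filter (fun m => t' < lphi c u (seq m))).card
            < ((Finset.range n).filter (fun m => t < lphi c u (seq m))).card :=
          Finset.card_lt_card ⟨hsub, fun hsup => hbnot (hsup hbmem)⟩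
        have hcard' : ((Finset.range n).filter (fun m => t' < lphi c u (seq m))).card ≤ N := by
          omega
        obtain ⟨k', hk1, hk2⟩ := IH (i+1) j t' hcard' hbx hLb
          (by rwa [show i+1+1 = i+2 by omega]) hLx hLy ht1
          (by rwa [show i+1+1 = i+2 by omega]) (by linarith) ht2
        refine ⟨k' + 1, ?_, ?_⟩
        · rw [show i + 1 + (k' + 1) = i + 1 + 1 + k' by omega]
          exact hk1
        · intro m hm
          rcases Nat.eq_zero_or_pos m with rfl | hmpos
          · simpa using hLb
          · obtain ⟨m', rfl⟩ : ∃ m', m = m' + 1 := ⟨m - 1, by omega⟩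
            rw [show i + 1 + (m' + 1) = i + 1 + 1 + m' by omega]
            exact hk2 m' (by omega)
      · exact absurd (lmem_inj hu hLb hLx heq) hbx
      · -- descend towards the predecessor of j
        set jp := j + (n - 1) with hjpdef
        have hjp1 : seq (jp + 1) = seq j := by
          rw [show jp + 1 = j + n by omega, hper]
        have hne : seq i ≠ seq jp := by
          intro h
          have h1 := hinj _ _ h
          have h2' := msucc _ _ h1
          have h3 : seq (i+1) = seq (jp+1) := seqmod _ _ h2'
          rw [hjp1] at h3
          exact hbx h3
        have key := h2 i jp hne
        rw [hjp1] at key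
        have dab : dist (seq i) (seq (i+1))
            = lphi c u (seq (i+1)) - lphi c u (seq i) := by
          rw [lphi_dist hu hLa hLb,
            abs_of_neg (by linarith : lphi c u (seq i) - lphi c u (seq (i+1)) < 0)]
          ring
        have dbx : dist (seq (i+1)) (seq j)
            = lphi c u (seq (i+1)) - lphi c u (seq j) := by
          rw [lphi_dist hu hLb hLx, abs_of_pos (by linarith)]
        have dax : dist (seq i) (seq j) = lphi c u (seq j) - lphi c u (seq i) := by
          rw [lphi_dist hu hLa hLx,
            abs_of_neg (by linarith : lphi c u (seq i) - lphi c u (seq j) < 0)]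
          ring
        have tri := dist_triangle (seq i) (seq j) (seq jp)
        have hsymm : dist (seq jp) (seq j) = dist (seq j) (seq jp) := dist_comm _ _
        have heq2 : dist (seq i) (seq j) + dist (seq j) (seq jp) = dist (seq i) (seq jp) := by
          apply le_antisymm
          · linarith [key, dab, dbx, dax, hsymm]
          · exact tri
        have hseg : seq j ∈ segment ℝ (seq i) (seq jp) :=
          mem_segment_iff_wbtw.2 (dist_add_dist_eq_iff.1 heq2)
        have hxa : seq j ≠ seq i := by
          intro h
          have h' := congrArg (lphi c u) h
          linarith
        have hxp : seq j ≠ seq jp := by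
          intro h
          have h1 := hinj _ _ h
          have h2' := msucc _ _ h1
          have h3 : seq (j+1) = seq (jp+1) := seqmod _ _ h2'
          rw [hjp1] at h3
          have h' := congrArg (lphi c u) h3
          linarith
        obtain ⟨hLp, hmono⟩ := stretch hu hLa hLx hseg hxa hxp
        have hXP : lphi c u (seq j) < lphi c u (seq jp) := hmono (by linarith)
        set t' := (lphi c u (seq j)
            + min (lphi c u (seq (i+1))) (lphi c u (seq jp))) / 2 with ht'def
        have hmin : lphi c u (seq j)
            < min (lphi c u (seq (i+1))) (lphi c u (seq jp)) := lt_min hgt hXP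
        have ht1 : lphi c u (seq j) < t' := by rw [ht'def]; linarith
        have ht2 : t' < lphi c u (seq (i+1)) := by
          have h' := min_le_left (lphi c u (seq (i+1))) (lphi c u (seq jp))
          rw [ht'def]; linarith
        have ht3 : t' < lphi c u (seq jp) := by
          have h' := min_le_right (lphi c u (seq (i+1))) (lphi c u (seq jp))
          rw [ht'def]; linarith
        have htt : t < t' := by linarith
        have hsub : (Finset.range n).filter (fun m => t' < lphi c u (seq m))
            ⊆ (Finset.range n).filter (fun m => t < lphi c u (seq m)) := by
          intro m hm
          rw [Finset.mem_filter] at hm ⊢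
          exact ⟨hm.1, by linarith [hm.2]⟩
        have hxmem : j % n ∈ (Finset.range n).filter (fun m => t < lphi c u (seq m)) := by
          refine Finset.mem_filter.2 ⟨Finset.mem_range.2 (Nat.mod_lt _ hn0), ?_⟩
          show t < lphi c u (seq (j % n))
          rw [seqmod (j % n) j (Nat.mod_mod_of_dvd _ dvd_rfl)]
          exact hX
        have hxnot : j % n ∉ (Finset.range n).filter (fun m => t' < lphi c u (seq m)) := by
          intro hmem
          rw [Finset.mem_filter] at hmem
          have h' : t' < lphi c u (seq (j % n)) := hmem.2
          rw [seqmod (j % n) j (Nat.mod_mod_of_dvd _ dvd_rfl)] at h'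
          linarith
        have hcard2 : ((Finset.range n).filter (fun m => t' < lphi c u (seq m))).card
            < ((Finset.range n).filter (fun m => t < lphi c u (seq m))).card :=
          Finset.card_lt_card ⟨hsub, fun hsup => hxnot (hsup hxmem)⟩
        have hcard' : ((Finset.range n).filter (fun m => t' < lphi c u (seq m))).card ≤ N := by
          omega
        obtain ⟨k', hk1, hk2⟩ := IH i jp t' hcard' hne hLa hLb hLp
          (by rw [hjp1]; exact hLx) (by linarith) ht2 (by rw [hjp1]; exact ht1) ht3
        refine ⟨k' + 1, ?_, ?_⟩
        · rw [show i + 1 + (k' + 1) = (i + 1 + k') + 1 by omega]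
          rw [msucc _ _ hk1]
          rw [show jp + 1 = j + n by omega, Nat.add_mod_right]
        · intro m hm
          rcases Nat.lt_or_ge m (k'+1) with hlt2 | hge
          · exact hk2 m (by omega)
          · have hm' : m = k' + 1 := by omega
            subst hm'
            rw [show i + 1 + (k' + 1) = (i + 1 + k') + 1 by omega]
            have h5 : seq ((i+1+k')+1) = seq (jp+1) := seqmod _ _ (msucc _ _ hk1)
            rw [h5, hjp1]
            exact hLx

lemma lmem_neg (c u v : ℂ) : lmem c (-u) v ↔ lmem c u v := by
  unfold lmem
  rw [map_neg, mul_neg, Complex.neg_im, neg_eq_zero]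

lemma lphi_neg (c u v : ℂ) : lphi c (-u) v = - lphi c u v := by
  unfold lphi
  rw [map_neg, mul_neg, Complex.neg_re]

lemma seq_mod_eq (n : ℕ) (seq : ℕ → ℂ) (hper : ∀ m, seq (m + n) = seq m)
    {m1 m2 : ℕ} (h : m1 % n = m2 % n) : seq m1 = seq m2 := by
  have seqshift : ∀ q r, seq (r + q * n) = seq r := by
    intro q
    induction q with
    | zero => intro r; simp
    | succ q ih =>
        intro r
        have e : r + (q+1) * n = (r + q * n) + n := by ring
        rw [e, hper, ih]
  have e1 : seq m1 = seq (m1 % n) := by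
    conv_lhs => rw [← Nat.mod_add_div' m1 n]
    exact seqshift (m1 / n) (m1 % n)
  have e2 : seq m2 = seq (m2 % n) := by
    conv_lhs => rw [← Nat.mod_add_div' m2 n]
    exact seqshift (m2 / n) (m2 % n)
  rw [e1, e2, h]

lemma mod_succ_congr {n m1 m2 : ℕ} (h0 : 0 < n) (h : m1 % n = m2 % n) :
    (m1 + 1) % n = (m2 + 1) % n := by
  rw [← mod_succ_eq m1 n h0, h, mod_succ_eq m2 n h0]

lemma mod_succ_ne {n : ℕ} (hn : 2 ≤ n) (m : ℕ) : m % n ≠ (m + 1) % n := by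
  intro h
  have h2' : (n:ℤ) ∣ ((m+1 : ℕ) : ℤ) - ((m : ℕ) : ℤ) := Nat.ModEq.dvd h
  have h3 : (n:ℤ) ∣ 1 := by
    have e : ((m+1 : ℕ) : ℤ) - ((m:ℕ):ℤ) = 1 := by push_cast; ring
    rwa [e] at h2'
  have h4 : (n:ℤ) ≤ 1 := Int.le_of_dvd one_pos h3
  have h5 : (2:ℤ) ≤ (n:ℤ) := by exact_mod_cast hn
  omega

/-- Main geometric lemma: if a 2-optimal tour has a rightward on-line crossing edge and a
leftward on-line crossing edge at a common level `t`, then the whole tour is on the line. -/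
lemma tour_lmem_all (n : ℕ) (seq : ℕ → ℂ) (hn : 2 ≤ n)
    (hper : ∀ m, seq (m + n) = seq m)
    (hinj : ∀ m1 m2, seq m1 = seq m2 → m1 % n = m2 % n)
    (h2 : ∀ m m', seq m ≠ seq m' →
      dist (seq m) (seq (m+1)) + dist (seq m') (seq (m'+1))
        ≤ dist (seq m) (seq m') + dist (seq (m+1)) (seq (m'+1)))
    (c u : ℂ) (hu : ‖u‖ = 1)
    (i j : ℕ) (t : ℝ)
    (hij : seq i ≠ seq j)
    (hLa : lmem c u (seq i)) (hLb : lmem c u (seq (i+1)))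
    (hLx : lmem c u (seq j)) (hLy : lmem c u (seq (j+1)))
    (hA : lphi c u (seq i) < t) (hB : t < lphi c u (seq (i+1)))
    (hY : lphi c u (seq (j+1)) < t) (hX : t < lphi c u (seq j)) :
    ∀ m, lmem c u (seq m) := by
  have hn0 : 0 < n := by omega
  obtain ⟨k1, hk1, hw1⟩ := walk_right n seq hn hper hinj h2 c u hu
    (((Finset.range n).filter (fun m => t < lphi c u (seq m))).card) i j t le_rfl
    hij hLa hLb hLx hLy hA hB hY hX
  have hu' : ‖-u‖ = 1 := by rw [norm_neg]; exact hu
  obtain ⟨k2, hk2, hw2⟩ := walk_right n seq hn hper hinj h2 c (-u) hu'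
    (((Finset.range n).filter (fun m => -t < lphi c (-u) (seq m))).card) j i (-t) le_rfl
    (Ne.symm hij)
    ((lmem_neg c u _).2 hLx) ((lmem_neg c u _).2 hLy)
    ((lmem_neg c u _).2 hLa) ((lmem_neg c u _).2 hLb)
    (by rw [lphi_neg]; linarith) (by rw [lphi_neg]; linarith)
    (by rw [lphi_neg]; linarith) (by rw [lphi_neg]; linarith)
  have hw2' : ∀ m ≤ k2, lmem c u (seq (j+1+m)) := fun m hm => (lmem_neg c u _).1 (hw2 m hm)
  have hdvd : n ∣ (k1 + k2 + 2) := by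
    have h1 : Nat.ModEq n (i+1+k1) j := hk1
    have h2' : Nat.ModEq n (j+1+k2) i := hk2
    have h3 : Nat.ModEq n ((i+1+k1) + (j+1+k2)) (j + i) := h1.add h2'
    have h4 := h3.dvd
    have h5 : (n:ℤ) ∣ ((k1+k2+2 : ℕ):ℤ) := by
      have e : ((j+i : ℕ) : ℤ) - (((i+1+k1)+(j+1+k2) : ℕ) : ℤ) = -((k1+k2+2 : ℕ):ℤ) := by
        push_cast; ring
      rw [e] at h4
      exact (dvd_neg).1 h4
    exact_mod_cast h5
  have hnk : n ≤ k1 + k2 + 2 := Nat.le_of_dvd (by omega) hdvd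
  have hcov : ∀ d, d ≤ k1 + k2 + 1 → lmem c u (seq (i+1+d)) := by
    intro d hd
    rcases le_or_gt d k1 with h | h
    · exact hw1 d h
    · obtain ⟨d2, rfl⟩ : ∃ d2, d = k1 + 1 + d2 := ⟨d - k1 - 1, by omega⟩
      have hd2 : d2 ≤ k2 := by omega
      have hmeq : (i+1+(k1+1+d2)) % n = (j+1+d2) % n := by
        have h1 : Nat.ModEq n (i+1+k1) j := hk1
        have h2' := h1.add_right (1+d2)
        have e1 : i+1+(k1+1+d2) = i+1+k1+(1+d2) := by omega
        have e2 : j+(1+d2) = j+1+d2 := by omega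
        rw [e1, ← e2]
        exact h2'
      rw [seq_mod_eq n seq hper hmeq]
      exact hw2' d2 hd2
  intro m
  obtain ⟨d, hdn, hdm⟩ := cover_arith n ((i+1) % n) (m % n) hn0 (Nat.mod_lt _ hn0)
    (Nat.mod_lt _ hn0)
  have hme : (i+1+d) % n = m % n := by
    rw [Nat.add_mod (i+1) d n, Nat.mod_eq_of_lt hdn]
    exact hdm
  rw [seq_mod_eq n seq hper hme.symm]
  exact hcov d (by omega)

lemma toC_add (p q : ℝ × ℝ) : toC (p + q) = toC p + toC q := by
  apply Complex.ext <;> simp [toC]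

lemma toC_smul (s : ℝ) (p : ℝ × ℝ) : toC (s • p) = (s : ℂ) * toC p := by
  apply Complex.ext <;>
    simp [toC, Complex.mul_re, Complex.mul_im, Prod.smul_fst, Prod.smul_snd, smul_eq_mul]

lemma toC_pair (w : ℂ) : toC (w.re, w.im) = w := by
  apply Complex.ext <;> simp [toC]

/-- In a non-degenerate Euclidean TSP instance (the points of `V` do not all lie
on a common line), every 2-optimal tour is simple. -/
theorem two_opt_simple (V : Finset (ℝ × ℝ))
    (hnd : ¬ Collinear ℝ (V : Set (ℝ × ℝ)))
    (L : List (ℝ × ℝ)) (hL : IsTour V L) (h2 : IsTwoOptimal 2 L) :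
    IsSimpleTour L := by
  obtain ⟨hnodup, hVL⟩ := hL
  have hn2 : 2 ≤ L.length := by
    by_contra hlt
    push_neg at hlt
    apply hnd
    have hcard : V.card ≤ 1 := by
      rw [← hVL, List.toFinset_card_of_nodup hnodup]
      omega
    have hss : (V : Set (ℝ × ℝ)).Subsingleton := by
      intro p hp q hq
      exact Finset.card_le_one.1 hcard p (by exact_mod_cast hp) q (by exact_mod_cast hq)
    rcases hss.eq_empty_or_singleton with h | ⟨p, h⟩
    · rw [h]; exact collinear_empty ℝ (ℝ × ℝ)
    · rw [h]; exact collinear_singleton ℝ p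
  have h0 : 0 < L.length := by omega
  intro e he f hf hef z hz1 hz2
  obtain ⟨i, hia, hib⟩ := mem_zip_tourSeq L h0 he
  obtain ⟨j, hjx, hjy⟩ := mem_zip_tourSeq L h0 hf
  have hperC : ∀ m, tourSeq L h0 (m + L.length) = tourSeq L h0 m :=
    fun m => tourSeq_mod L h0 (Nat.add_mod_right m L.length)
  have hinjC : ∀ m1 m2, tourSeq L h0 m1 = tourSeq L h0 m2 → m1 % L.length = m2 % L.length :=
    fun m1 m2 h => tourSeq_inj L h0 hnodup h
  have h2C : ∀ m m', tourSeq L h0 m ≠ tourSeq L h0 m' →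
      dist (tourSeq L h0 m) (tourSeq L h0 (m+1)) + dist (tourSeq L h0 m') (tourSeq L h0 (m'+1))
        ≤ dist (tourSeq L h0 m) (tourSeq L h0 m')
          + dist (tourSeq L h0 (m+1)) (tourSeq L h0 (m'+1)) := by
    intro m m' hne
    obtain ⟨e1, he1, he1a, he1b⟩ := tourSeq_zip_mem L h0 m
    obtain ⟨e2, he2, he2a, he2b⟩ := tourSeq_zip_mem L h0 m'
    have hne2 : e1 ≠ e2 := by
      intro h
      apply hne
      rw [← he1a, ← he2a, h]
    have hkey := h2 e1 he1 e2 he2 hne2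
    simp only [pdist_two] at hkey
    rw [he1a, he1b, he2a, he2b] at hkey
    exact hkey
  have hij : tourSeq L h0 i ≠ tourSeq L h0 j := by
    intro h
    apply hef
    have h1 := hinjC _ _ h
    have hfst : e.1 = f.1 := toC_inj (by rw [hia, hjx]; exact tourSeq_mod L h0 h1)
    have hsnd : e.2 = f.2 := toC_inj
      (by rw [hib, hjy]; exact tourSeq_mod L h0 (mod_succ_congr h0 h1))
    exact Prod.ext hfst hsnd
  have hab : toC e.1 ≠ toC e.2 := by
    rw [hia, hib]
    intro h
    exact mod_succ_ne hn2 i (hinjC _ _ h)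
  have hxy : toC f.1 ≠ toC f.2 := by
    rw [hjx, hjy]
    intro h
    exact mod_succ_ne hn2 j (hinjC _ _ h)
  have hby : toC e.2 ≠ toC f.2 := by
    rw [hib, hjy]
    intro h
    have h1 := hinjC _ _ h
    have h2' := Nat.ModEq.add_right_cancel' 1 h1
    exact hij (tourSeq_mod L h0 h2')
  have hz1C : toC z ∈ segment ℝ (toC e.1) (toC e.2) := toC_segment hz1
  have hz2C : toC z ∈ segment ℝ (toC f.1) (toC f.2) := toC_segment hz2
  have contra : ∀ _ : (toC z ∈ openSegment ℝ (toC e.1) (toC e.2)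
      ∨ toC z ∈ openSegment ℝ (toC f.1) (toC f.2)), False := by
    intro hop
    apply hnd
    set a := toC e.1 with hadef
    set b := toC e.2 with hbdef
    set x := toC f.1 with hxdef
    set y := toC f.2 with hydef
    have hax : a ≠ x := by rw [hia, hjx]; exact hij
    have hr0 : b - a ≠ 0 := sub_ne_zero.2 (Ne.symm hab)
    set r := ‖b - a‖ with hrdef
    have hr : 0 < r := norm_pos_iff.mpr hr0
    set u := (b - a) / ((r : ℝ) : ℂ) with hudef
    have hu : ‖u‖ = 1 := by
      rw [hudef, norm_div, Complex.norm_real, Real.norm_eq_abs, abs_of_pos hr, ← hrdef]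
      exact div_self (ne_of_gt hr)
    have hrne : ((r : ℝ) : ℂ) ≠ 0 := by
      simp only [ne_eq, Complex.ofReal_eq_zero]
      exact ne_of_gt hr
    have hba : b - a = ((r : ℝ) : ℂ) * u := by
      rw [hudef]
      field_simp
    have hLa : lmem a u a := by unfold lmem; simp
    have hpa : lphi a u a = 0 := by unfold lphi; simp
    have hconj : (b - a) * (starRingEnd ℂ) u = ((r : ℝ) : ℂ) := by
      calc (b - a) * (starRingEnd ℂ) u = ((r:ℝ):ℂ) * (u * (starRingEnd ℂ) u) := by
            rw [hba, mul_assoc]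
        _ = ((r:ℝ):ℂ) * ((Complex.normSq u : ℝ) : ℂ) := by rw [Complex.mul_conj]
        _ = ((r:ℝ):ℂ) := by
            rw [Complex.normSq_eq_norm_sq, hu]
            norm_num
    have hLb : lmem a u b := by unfold lmem; rw [hconj]; simp
    have hpb : lphi a u b = r := by unfold lphi; rw [hconj]; simp
    have hzL : lmem a u (toC z) := seg_lmem hLa hLb hz1C
    have hall : ∀ m, lmem a u (tourSeq L h0 m) := by
      by_cases hxb : x = b
      · -- f = (b, y) : the tour edge following e
        have hzb : toC z ≠ b := by
          intro hzb
          rcases hop with h1 | h1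
          · exact (open_ne h1 hab).2 hzb
          · exact (open_ne h1 hxy).1 (by rw [hzb, hxb])
        have hLy : lmem a u y := by
          by_cases hzy : toC z = y
          · rw [← hzy]; exact hzL
          · refine (stretch hu ?_ hzL hz2C ?_ hzy).1
            · rw [hxb]; exact hLb
            · rw [hxb]; exact hzb
        have hzbtw1 := seg_btw a u hz1C
        rw [hpa, hpb] at hzbtw1
        have hpx : lphi a u x = r := by rw [hxb, hpb]
        have hzbtw2 := seg_btw a u hz2C
        rw [hpx] at hzbtw2
        have hYr : lphi a u y < r := by
          by_contra hge
          push_neg at hge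
          apply hzb
          apply lmem_inj hu hzL hLb
          rw [hpb]
          have h1 : lphi a u (toC z) ≤ r := by
            have h' := hzbtw1.2
            rw [max_eq_right (le_of_lt hr)] at h'
            exact h'
          have h2' : r ≤ lphi a u (toC z) := by
            have h' := hzbtw2.1
            rw [min_eq_left hge] at h'
            exact h'
          linarith
        set t := (max 0 (lphi a u y) + r) / 2 with htdef
        have hmax : max 0 (lphi a u y) < r := max_lt hr hYr
        have ht0 : 0 < t := by
          have h' := le_max_left 0 (lphi a u y)
          rw [htdef]; linarith
        have htr : t < r := by rw [htdef]; linarith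
        have htY : lphi a u y < t := by
          have h' := le_max_right 0 (lphi a u y)
          rw [htdef]; linarith
        exact tour_lmem_all L.length (tourSeq L h0) hn2 hperC hinjC h2C a u hu i j t hij
          (by rw [← hia]; exact hLa) (by rw [← hib]; exact hLb)
          (by rw [← hjx]; rw [hxb]; exact hLb) (by rw [← hjy]; exact hLy)
          (by rw [← hia, hpa]; exact ht0) (by rw [← hib, hpb]; exact htr)
          (by rw [← hjy]; exact htY) (by rw [← hjx, hpx]; exact htr)
      · by_cases hya : y = a
        · -- f = (x, a) : the tour edge preceding e
          have hza : toC z ≠ a := by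
            intro hza
            rcases hop with h1 | h1
            · exact (open_ne h1 hab).1 hza
            · exact (open_ne h1 hxy).2 (by rw [hza, hya])
          have hLx : lmem a u x := by
            by_cases hzx : toC z = x
            · rw [← hzx]; exact hzL
            · have hz2C' : toC z ∈ segment ℝ y x := by rw [segment_symm]; exact hz2C
              refine (stretch hu ?_ hzL hz2C' ?_ hzx).1
              · rw [hya]; exact hLa
              · rw [hya]; exact hza
          have hpy : lphi a u y = 0 := by rw [hya, hpa]
          have hzbtw1 := seg_btw a u hz1C
          rw [hpa, hpb] at hzbtw1
          have hzbtw2 := seg_btw a u hz2C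
          rw [hpy] at hzbtw2
          have hX0 : 0 < lphi a u x := by
            by_contra hge
            push_neg at hge
            apply hza
            apply lmem_inj hu hzL hLa
            rw [hpa]
            have h1 : 0 ≤ lphi a u (toC z) := by
              have h' := hzbtw1.1
              rw [min_eq_left (le_of_lt hr)] at h'
              exact h'
            have h2' : lphi a u (toC z) ≤ 0 := by
              have h' := hzbtw2.2
              rw [max_eq_right hge] at h'
              exact h'
            linarith
          set t := (min r (lphi a u x)) / 2 with htdef
          have hmin : 0 < min r (lphi a u x) := lt_min hr hX0
          have ht0 : 0 < t := by rw [htdef]; linarith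
          have htr : t < r := by
            have h' := min_le_left r (lphi a u x)
            rw [htdef]; linarith
          have htX : t < lphi a u x := by
            have h' := min_le_right r (lphi a u x)
            rw [htdef]; linarith
          exact tour_lmem_all L.length (tourSeq L h0) hn2 hperC hinjC h2C a u hu i j t hij
            (by rw [← hia]; exact hLa) (by rw [← hib]; exact hLb)
            (by rw [← hjx]; exact hLx) (by rw [← hjy]; rw [hya]; exact hLa)
            (by rw [← hia, hpa]; exact ht0) (by rw [← hib, hpb]; exact htr)
            (by rw [← hjy, hpy]; exact ht0) (by rw [← hjx]; exact htX)
        · -- generic case : the four endpoints are pairwise distinct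
          have key := h2C i j hij
          rw [← hia, ← hib, ← hjx, ← hjy] at key
          have e1 : dist a (toC z) + dist (toC z) b = dist a b :=
            dist_add_dist_eq_iff.2 (mem_segment_iff_wbtw.1 hz1C)
          have e2 : dist x (toC z) + dist (toC z) y = dist x y :=
            dist_add_dist_eq_iff.2 (mem_segment_iff_wbtw.1 hz2C)
          have t1 := dist_triangle a (toC z) x
          have t2 := dist_triangle b (toC z) y
          have c1 := dist_comm (toC z) x
          have c2 := dist_comm (toC z) b
          have c3 := dist_comm (toC z) y
          have eq1 : dist a (toC z) + dist (toC z) x = dist a x := by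
            apply le_antisymm
            · linarith [key, e1, e2, t2, c1, c2, c3]
            · exact t1
          have eq2 : dist b (toC z) + dist (toC z) y = dist b y := by
            apply le_antisymm
            · linarith [key, e1, e2, t1, c1, c2, c3]
            · exact t2
          have hsax : toC z ∈ segment ℝ a x :=
            mem_segment_iff_wbtw.2 (dist_add_dist_eq_iff.1 eq1)
          have hsby : toC z ∈ segment ℝ b y :=
            mem_segment_iff_wbtw.2 (dist_add_dist_eq_iff.1 eq2)
          obtain ⟨hLx, hLy⟩ : lmem a u x ∧ lmem a u y := by
            by_cases hza : toC z = a
            · have hLy : lmem a u y := by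
                by_cases hzy : toC z = y
                · rw [← hzy]; exact hzL
                · refine (stretch hu hLb hzL hsby ?_ hzy).1
                  rw [hza]; exact hab
              have hLx : lmem a u x := by
                by_cases hzx : toC z = x
                · rw [← hzx]; exact hzL
                · have hz2C' : toC z ∈ segment ℝ y x := by rw [segment_symm]; exact hz2C
                  refine (stretch hu hLy hzL hz2C' ?_ hzx).1
                  rw [hza]; intro hh; exact hya hh.symm
              exact ⟨hLx, hLy⟩
            · have hLx : lmem a u x := by
                by_cases hzx : toC z = x
                · rw [← hzx]; exact hzL
                · exact (stretch hu hLa hzL hsax hza hzx).1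
              have hLy : lmem a u y := by
                by_cases hzy : toC z = y
                · rw [← hzy]; exact hzL
                · by_cases hzb : toC z = b
                  · refine (stretch hu hLx hzL hz2C ?_ hzy).1
                    rw [hzb]; intro hh; exact hxb hh.symm
                  · exact (stretch hu hLb hzL hsby hzb hzy).1
              exact ⟨hLx, hLy⟩
          have hXY : lphi a u x ≠ lphi a u y := fun h => hxy (lmem_inj hu hLx hLy h)
          have hbtw1 := seg_btw a u hz1C
          rw [hpa, hpb] at hbtw1
          have hbtw2 := seg_btw a u hz2C
          have hbtwax := seg_btw a u hsax
          rw [hpa] at hbtwax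
          have hbtwby := seg_btw a u hsby
          rw [hpb] at hbtwby
          have hkey2 : max 0 (lphi a u y) < min r (lphi a u x) := by
            rcases hop with h1 | h1
            · have hs := open_btw a u h1 (by rw [hpa, hpb]; exact ne_of_lt hr)
              rw [hpa, hpb, min_eq_left (le_of_lt hr), max_eq_right (le_of_lt hr)] at hs
              have hXz : lphi a u (toC z) ≤ lphi a u x := by
                rcases le_or_gt (lphi a u x) 0 with hX0 | hX0
                · exfalso
                  have h' := hbtwax.2
                  rw [max_eq_left hX0] at h'
                  linarith [hs.1]
                · have h' := hbtwax.2
                  rw [max_eq_right hX0.le] at h'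
                  exact h'
              have hYz : lphi a u y ≤ lphi a u (toC z) := by
                rcases le_or_gt r (lphi a u y) with hY0 | hY0
                · exfalso
                  have h' := hbtwby.1
                  rw [min_eq_left hY0] at h'
                  linarith [hs.2]
                · have h' := hbtwby.1
                  rw [min_eq_right hY0.le] at h'
                  exact h'
              have hYX : lphi a u y < lphi a u x :=
                lt_of_le_of_ne (le_trans hYz hXz) (Ne.symm hXY)
              exact max_lt (lt_min hr (by linarith [hs.1]))
                (lt_min (by linarith [hs.2]) hYX)
            · have hs := open_btw a u h1 hXY
              rcases lt_or_gt_of_ne hXY with hxy2 | hxy2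
              · exfalso
                rw [min_eq_left hxy2.le, max_eq_right hxy2.le] at hs
                rcases le_or_gt (lphi a u x) 0 with hX0 | hX0
                · have h3 := hbtwax.2
                  rw [max_eq_left hX0] at h3
                  have h4 := hbtw1.1
                  rw [min_eq_left hr.le] at h4
                  rcases le_or_gt r (lphi a u y) with hrY | hrY
                  · have h5 := hbtwby.1
                    rw [min_eq_left hrY] at h5
                    linarith
                  · have h5 := hbtwby.1
                    rw [min_eq_right hrY.le] at h5
                    linarith [hs.2]
                · have h3 := hbtwax.2
                  rw [max_eq_right hX0.le] at h3
                  linarith [hs.1]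
              · rw [min_eq_right hxy2.le, max_eq_left hxy2.le] at hs
                have h4 := hbtw1.1
                rw [min_eq_left hr.le] at h4
                have h5 := hbtw1.2
                rw [max_eq_right hr.le] at h5
                exact max_lt (lt_min hr (by linarith [hs.1, hs.2]))
                  (lt_min (by linarith [hs.1, hs.2]) hxy2)
          set t := (max 0 (lphi a u y) + min r (lphi a u x)) / 2 with htdef
          have ht1 : 0 < t := by
            have h' := le_max_left 0 (lphi a u y)
            rw [htdef]; linarith [hkey2]
          have ht2 : lphi a u y < t := by
            have h' := le_max_right 0 (lphi a u y)
            rw [htdef]; linarith [hkey2]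
          have ht3 : t < r := by
            have h' := min_le_left r (lphi a u x)
            rw [htdef]; linarith [hkey2]
          have ht4 : t < lphi a u x := by
            have h' := min_le_right r (lphi a u x)
            rw [htdef]; linarith [hkey2]
          exact tour_lmem_all L.length (tourSeq L h0) hn2 hperC hinjC h2C a u hu i j t hij
            (by rw [← hia]; exact hLa) (by rw [← hib]; exact hLb)
            (by rw [← hjx]; exact hLx) (by rw [← hjy]; exact hLy)
            (by rw [← hia, hpa]; exact ht1) (by rw [← hib, hpb]; exact ht3)
            (by rw [← hjy]; exact ht2) (by rw [← hjx]; exact ht4)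
    refine (collinear_iff_exists_forall_eq_smul_vadd ((V : Set (ℝ × ℝ)))).2
      ⟨e.1, (u.re, u.im), ?_⟩
    intro p hp
    rw [← hVL, Finset.mem_coe, List.mem_toFinset] at hp
    obtain ⟨⟨ip, hip⟩, rfl⟩ := List.mem_iff_get.1 hp
    refine ⟨lphi a u (tourSeq L h0 ip), ?_⟩
    apply toC_inj
    rw [vadd_eq_add, toC_add, toC_smul, toC_pair]
    rw [get_eq_tourSeq L h0 hip]
    have hrep := lmem_repr hu (hall ip)
    rw [← hadef]
    linear_combination hrep
  refine ⟨fun h => contra (Or.inl (toC_openSegment h)),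
    fun h => contra (Or.inr (toC_openSegment h))⟩
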